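/- Let Ω̃ and Ω be open subsets of ℂ, let φ : Ω̃ → Ω be a holomorphic bijection with nonvanishing derivative, and let h(z) = |φ'(φ⁻¹(z))|⁻² be the conformal weight on Ω. Let α > 1 and assume ∫_{Ω̃} |φ'(w)|^{2α} dA(w) < ∞. Then for every measurable function f : Ω → ℝ and every r with α/(α-1) ≤ r < ∞, setting s = r(α-1)/α, one has (∫_{Ω} |f(z)|^s dA(z))^{1/s} ≤ (∫_{Ω̃} |φ'(w)|^{2α} dA(w))^{1/(αs)} · (∫_{Ω} |f(z)|^r h(z) dA(z))^{1/r} (an inequality in [0,∞]). -/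

import Mathlib

open MeasureTheory Real Set
open scoped ENNReal

lemma complex_det_smulRight (c : ℂ) :
    (((1 : ℂ →L[ℂ] ℂ).smulRight c).restrictScalars ℝ).det = Complex.normSq c := by
  have h1 : ((((1 : ℂ →L[ℂ] ℂ).smulRight c).restrictScalars ℝ : ℂ →L[ℝ] ℂ) : ℂ →ₗ[ℝ] ℂ)
      = Algebra.lmul ℝ ℂ c := by
    ext x
    simp [mul_comm]
  rw [ContinuousLinearMap.det, h1, ← Algebra.norm_apply, Algebra.norm_complex_apply]

theorem weighted_lebesgue_embedding
    (Ω' Ω : Set ℂ) (hΩ'o : IsOpen Ω') (hΩo : IsOpen Ω)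
    (φ ψ : ℂ → ℂ) (φ' : ℂ → ℂ)
    (hholo : ∀ w ∈ Ω', HasDerivAt φ (φ' w) w)
    (hφ'ne : ∀ w ∈ Ω', φ' w ≠ 0)
    (hbij : Set.BijOn φ Ω' Ω)
    (hinv : Set.InvOn ψ φ Ω' Ω)
    (h : ℂ → ℝ≥0∞)
    (hh : ∀ z ∈ Ω, h z = ((‖φ' (ψ z)‖₊ : ℝ≥0∞) ^ (2 : ℝ))⁻¹)
    (α : ℝ) (hα : 1 < α)
    (hreg : ∫⁻ w in Ω', (‖φ' w‖₊ : ℝ≥0∞) ^ (2 * α) < ⊤)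
    (f : ℂ → ℝ) (hf : Measurable f)
    (r s : ℝ) (hr : α / (α - 1) ≤ r) (hs : s = r * (α - 1) / α) :
    (∫⁻ z in Ω, (‖f z‖₊ : ℝ≥0∞) ^ s) ^ (1 / s)
      ≤ (∫⁻ w in Ω', (‖φ' w‖₊ : ℝ≥0∞) ^ (2 * α)) ^ (1 / (α * s))
        * (∫⁻ z in Ω, (‖f z‖₊ : ℝ≥0∞) ^ r * h z) ^ (1 / r) := by
  have hα1 : 0 < α - 1 := sub_pos.2 hα
  have hα0 : 0 < α := lt_trans one_pos hα
  have hrpos : 0 < r := lt_of_lt_of_le (div_pos hα0 hα1) hr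
  have hspos : 0 < s := by rw [hs]; positivity
  -- change of variables
  have hCoV : ∀ g : ℂ → ℝ≥0∞,
      (∫⁻ z in Ω, g z) = ∫⁻ w in Ω', (‖φ' w‖₊ : ℝ≥0∞) ^ (2 : ℝ) * g (φ w) := by
    intro g
    rw [← hbij.image_eq,
      lintegral_image_eq_lintegral_abs_det_fderiv_mul volume hΩ'o.measurableSet
        (fun w hw => ((hholo w hw).hasFDerivAt.restrictScalars ℝ).hasFDerivWithinAt)
        hbij.injOn g]
    refine setLIntegral_congr_fun hΩ'o.measurableSet (fun w hw => ?_)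
    congr 1
    rw [← ContinuousLinearMap.smulRight_one_eq_toSpanSingleton,
      complex_det_smulRight, abs_of_nonneg (Complex.normSq_nonneg _),
      Complex.normSq_eq_norm_sq,
      ENNReal.ofReal_pow (norm_nonneg _), ofReal_norm, enorm_eq_nnnorm,
      ← ENNReal.rpow_natCast]
    norm_num
  -- measurability
  have hφc : ContinuousOn φ Ω' := fun w hw => (hholo w hw).continuousAt.continuousWithinAt
  have hφm : AEMeasurable φ (volume.restrict Ω') := hφc.aemeasurable hΩ'o.measurableSet
  have hφ'c : ContinuousOn φ' Ω' := by
    have hdiff : DifferentiableOn ℂ φ Ω' :=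
      fun w hw => ((hholo w hw).differentiableAt).differentiableWithinAt
    have hana : AnalyticOnNhd ℂ φ Ω' := hdiff.analyticOnNhd hΩ'o
    exact hana.deriv.continuousOn.congr fun w hw => ((hholo w hw).deriv).symm
  have hFm : AEMeasurable (fun w => (‖f (φ w)‖₊ : ℝ≥0∞) ^ s) (volume.restrict Ω') :=
    (hf.comp_aemeasurable hφm).enorm.pow aemeasurable_const
  have hGm : AEMeasurable (fun w => (‖φ' w‖₊ : ℝ≥0∞) ^ (2 : ℝ)) (volume.restrict Ω') :=
    ((hφ'c.aemeasurable hΩ'o.measurableSet).enorm).pow aemeasurable_const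
  -- conjugate exponents
  have hpq : (α / (α - 1)).HolderConjugate α := by
    have := (Real.HolderConjugate.conjExponent hα).symm
    simpa [Real.conjExponent] using this
  -- rewrite B via change of variables
  have hB : (∫⁻ z in Ω, (‖f z‖₊ : ℝ≥0∞) ^ r * h z)
      = ∫⁻ w in Ω', (‖f (φ w)‖₊ : ℝ≥0∞) ^ r := by
    rw [hCoV]
    refine setLIntegral_congr_fun hΩ'o.measurableSet (fun w hw => ?_)
    have hmem : φ w ∈ Ω := hbij.mapsTo hw
    have h0 : (‖φ' w‖₊ : ℝ≥0∞) ≠ 0 := by simpa using hφ'ne w hw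
    have hne : ((‖φ' w‖₊ : ℝ≥0∞)) ^ (2 : ℝ) ≠ 0 := by
      simp [ENNReal.rpow_eq_zero_iff, h0]
    have htop : ((‖φ' w‖₊ : ℝ≥0∞)) ^ (2 : ℝ) ≠ ⊤ := by
      simp [ENNReal.rpow_eq_top_iff, h0]
    rw [hh _ hmem, hinv.1 hw, mul_comm ((‖f (φ w)‖₊ : ℝ≥0∞) ^ r), ← mul_assoc,
      ENNReal.mul_inv_cancel hne htop, one_mul]
  -- rewrite A via change of variables
  have hA : (∫⁻ z in Ω, (‖f z‖₊ : ℝ≥0∞) ^ s)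
      = ∫⁻ w in Ω', (‖f (φ w)‖₊ : ℝ≥0∞) ^ s * (‖φ' w‖₊ : ℝ≥0∞) ^ (2 : ℝ) := by
    rw [hCoV]
    exact lintegral_congr fun w => mul_comm _ _
  -- Hölder
  have holder := ENNReal.lintegral_mul_le_Lp_mul_Lq (volume.restrict Ω') hpq hFm hGm
  have hexp1 : ∀ w : ℂ, ((‖f (φ w)‖₊ : ℝ≥0∞) ^ s) ^ (α / (α - 1))
      = (‖f (φ w)‖₊ : ℝ≥0∞) ^ r := by
    intro w
    rw [← ENNReal.rpow_mul]
    congr 1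
    rw [hs]
    field_simp
  have hexp2 : ∀ w : ℂ, ((‖φ' w‖₊ : ℝ≥0∞) ^ (2 : ℝ)) ^ α
      = (‖φ' w‖₊ : ℝ≥0∞) ^ (2 * α) := by
    intro w
    rw [← ENNReal.rpow_mul]
  have h1p : 1 / (α / (α - 1)) = s / r := by
    rw [hs]
    field_simp
  simp only [Pi.mul_apply, hexp1, hexp2, h1p] at holder
  rw [hA]
  rw [hB]
  calc (∫⁻ w in Ω', (‖f (φ w)‖₊ : ℝ≥0∞) ^ s * (‖φ' w‖₊ : ℝ≥0∞) ^ (2 : ℝ)) ^ (1 / s)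
      ≤ ((∫⁻ w in Ω', (‖f (φ w)‖₊ : ℝ≥0∞) ^ r) ^ (s / r)
          * (∫⁻ w in Ω', (‖φ' w‖₊ : ℝ≥0∞) ^ (2 * α)) ^ (1 / α)) ^ (1 / s) :=
        ENNReal.rpow_le_rpow holder (by positivity)
    _ = (∫⁻ w in Ω', (‖f (φ w)‖₊ : ℝ≥0∞) ^ r) ^ (s / r * (1 / s))
          * (∫⁻ w in Ω', (‖φ' w‖₊ : ℝ≥0∞) ^ (2 * α)) ^ (1 / α * (1 / s)) := by
        rw [ENNReal.mul_rpow_of_nonneg _ _ (by positivity), ← ENNReal.rpow_mul,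
          ← ENNReal.rpow_mul]
    _ = (∫⁻ w in Ω', (‖φ' w‖₊ : ℝ≥0∞) ^ (2 * α)) ^ (1 / (α * s))
          * (∫⁻ w in Ω', (‖f (φ w)‖₊ : ℝ≥0∞) ^ r) ^ (1 / r) := by
        rw [mul_comm]
        congr 1
        · congr 1
          field_simp
        · congr 1
          field_simp
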